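/- Let 1 ≤ a ≤ √3, c = (9/8)(a + 1/a), and K ≥ c²/9. Then 9a⁴ - 4ca³ + 4Ka² ≥ 0 and Ka² - ca + 9/4 ≥ 0, and the quantities α = (1/2)(3 - 3a² + √(9a⁴ - 4ca³ + 4Ka²)), β = (1/2)(3 - 3a² - √(9a⁴ - 4ca³ + 4Ka²)), γ = √(Ka² - ca + 9/4) satisfy β ≤ α ≤ γ. -/

import Mathlib

open Real

/-- For `1 ≤ a ≤ √3`, `c = (9/8)(a + 1/a)` and `K ≥ c²/9`, the quantities
`α`, `β`, `γ` appearing in the period integral are well defined and satisfy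
`β ≤ α ≤ γ`. -/
theorem stmt_10 (a : ℝ) (ha1 : 1 ≤ a) (ha2 : a ≤ Real.sqrt 3)
    (c : ℝ) (hc : c = 9 / 8 * (a + 1 / a)) (K : ℝ) (hK : c ^ 2 / 9 ≤ K) :
    0 ≤ 9 * a ^ 4 - 4 * c * a ^ 3 + 4 * K * a ^ 2 ∧
    0 ≤ K * a ^ 2 - c * a + 9 / 4 ∧
    (1 / 2) * (3 - 3 * a ^ 2 - Real.sqrt (9 * a ^ 4 - 4 * c * a ^ 3 + 4 * K * a ^ 2))
      ≤ (1 / 2) * (3 - 3 * a ^ 2 + Real.sqrt (9 * a ^ 4 - 4 * c * a ^ 3 + 4 * K * a ^ 2)) ∧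
    (1 / 2) * (3 - 3 * a ^ 2 + Real.sqrt (9 * a ^ 4 - 4 * c * a ^ 3 + 4 * K * a ^ 2))
      ≤ Real.sqrt (K * a ^ 2 - c * a + 9 / 4) := by
  have ha0 : (0:ℝ) < a := lt_of_lt_of_le one_pos ha1
  have hca : c * a = 9 / 8 * (a ^ 2 + 1) := by
    rw [hc, mul_assoc, add_mul, one_div, inv_mul_cancel₀ ha0.ne']; ring
  have hD : 0 ≤ 9 * a ^ 4 - 4 * c * a ^ 3 + 4 * K * a ^ 2 := by
    nlinarith [sq_nonneg (3 * a ^ 2 - 2 / 3 * (c * a)), sq_nonneg a, mul_pos ha0 ha0]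
  have hE : 0 ≤ K * a ^ 2 - c * a + 9 / 4 := by
    nlinarith [sq_nonneg (c * a / 3 - 3 / 2), sq_nonneg a]
  refine ⟨hD, hE, ?_, ?_⟩
  · have := Real.sqrt_nonneg (9 * a ^ 4 - 4 * c * a ^ 3 + 4 * K * a ^ 2)
    linarith
  · set s := Real.sqrt (9 * a ^ 4 - 4 * c * a ^ 3 + 4 * K * a ^ 2) with hs
    have hs0 : 0 ≤ s := Real.sqrt_nonneg _
    have hs2 : s ^ 2 = 9 * a ^ 4 - 4 * c * a ^ 3 + 4 * K * a ^ 2 := Real.sq_sqrt hD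
    have ht0 : 0 ≤ Real.sqrt (K * a ^ 2 - c * a + 9 / 4) := Real.sqrt_nonneg _
    have ht2 : (Real.sqrt (K * a ^ 2 - c * a + 9 / 4)) ^ 2 = K * a ^ 2 - c * a + 9 / 4 :=
      Real.sq_sqrt hE
    -- key: 9a² - 2ca ≥ 0 and 3s ≥ 9a² - 2ca
    have hkey0 : 0 ≤ 9 * a ^ 2 - 2 * (c * a) := by nlinarith
    have hkey : 9 * a ^ 2 - 2 * (c * a) ≤ 3 * s := by
      nlinarith [sq_nonneg (3 * s - (9 * a ^ 2 - 2 * (c * a))), sq_nonneg (c * a),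
        mul_nonneg hs0 hkey0, sq_nonneg a, mul_pos ha0 ha0]
    -- E - α² = ((a²-1)/2)(3s - (9a² - 2ca)) ≥ 0
    have ha2' : 1 ≤ a ^ 2 := by nlinarith
    have hα2 : ((1 / 2) * (3 - 3 * a ^ 2 + s)) ^ 2 ≤ K * a ^ 2 - c * a + 9 / 4 := by
      nlinarith [mul_nonneg (by linarith : (0:ℝ) ≤ a ^ 2 - 1)
        (by linarith : (0:ℝ) ≤ 3 * s - (9 * a ^ 2 - 2 * (c * a)))]
    rcases le_or_gt ((1 / 2) * (3 - 3 * a ^ 2 + s)) 0 with h | h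
    · linarith
    · exact (Real.le_sqrt h.le hE).2 hα2
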